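/- Let U be a random vector in R^d with E[U] = 0, and let u_α satisfy P(‖U‖² < u_α) = 1 − α. Then for any event Ω with P(Ω) ≥ 1 − α and E[U | Ω] = 0, the trace of the conditional covariance matrix satisfies Trace(Cov(U | ‖U‖² < u_α)) ≤ Trace(Cov(U | Ω)). -/

import Mathlib

open MeasureTheory ProbabilityTheory

/-- For a mean-zero square-integrable random vector `U` in `ℝᵈ`, among
events of probability at least `1 - α` on which the conditional mean of `U` is zero,
the norm-ball truncation event `{‖U‖² < uα}` (of probability exactly `1 - α`)
minimizes the trace of the conditional covariance matrix; since the conditional mean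
is zero on the events considered, `Trace(Cov(U | Ω)) = E[‖U‖² | Ω]`. -/
theorem stmt_1
    {Ω : Type*} [MeasurableSpace Ω] (μ : Measure Ω) [IsProbabilityMeasure μ]
    (d : ℕ)
    (U : Ω → EuclideanSpace ℝ (Fin d)) (hU : Measurable U)
    (hUint : Integrable U μ)
    (hU2int : Integrable (fun ω => ‖U ω‖ ^ 2) μ)
    (hmean : ∫ ω, U ω ∂μ = 0)
    (α : ℝ) (hα : α ∈ Set.Ioo (0 : ℝ) 1)
    (uα : ℝ) (hquant : μ {ω | ‖U ω‖ ^ 2 < uα} = ENNReal.ofReal (1 - α))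
    (s : Set Ω) (hs : MeasurableSet s)
    (hsprob : ENNReal.ofReal (1 - α) ≤ μ s)
    (hscond : ∫ ω, U ω ∂(μ[|s]) = 0) :
    ∫ ω, ‖U ω‖ ^ 2 ∂(μ[|{ω | ‖U ω‖ ^ 2 < uα}]) ≤ ∫ ω, ‖U ω‖ ^ 2 ∂(μ[|s]) := by
  classical
  set f : Ω → ℝ := fun ω => ‖U ω‖ ^ 2 with hf
  have hfmeas : Measurable f := by fun_prop
  set A : Set Ω := {ω | f ω < uα} with hA
  have hAmeas : MeasurableSet A := hfmeas measurableSet_Iio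
  have hα1 : 0 < 1 - α := by linarith [hα.2]
  -- real measures
  have hμs_ne : μ s ≠ ⊤ := (measure_lt_top μ s).ne
  have hμA_ne : μ A ≠ ⊤ := (measure_lt_top μ A).ne
  set a : ℝ := (μ A).toReal with ha
  set b : ℝ := (μ s).toReal with hb
  have haval : a = 1 - α := by
    rw [ha, hquant, ENNReal.toReal_ofReal hα1.le]
  have ha_pos : 0 < a := by rw [haval]; exact hα1
  have hb_ge : a ≤ b := by
    rw [haval, hb]
    rw [← ENNReal.toReal_ofReal hα1.le]
    exact ENNReal.toReal_mono hμs_ne hsprob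
  have hb_pos : 0 < b := lt_of_lt_of_le ha_pos hb_ge
  -- uα > 0
  have hApos : (0 : ENNReal) < μ A := by
    rw [hquant]; exact ENNReal.ofReal_pos.mpr hα1
  have hAne : A.Nonempty := by
    by_contra h
    rw [Set.not_nonempty_iff_eq_empty] at h
    rw [h, measure_empty] at hApos
    exact lt_irrefl _ hApos
  obtain ⟨ω0, hω0⟩ := hAne
  have huα_pos : 0 < uα := lt_of_le_of_lt (by positivity : (0:ℝ) ≤ f ω0) hω0
  -- pieces
  set c : ℝ := (μ (s ∩ A)).toReal with hc
  have hsA : MeasurableSet (s ∩ A) := hs.inter hAmeas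
  have hdiffAs : MeasurableSet (A \ s) := hAmeas.diff hs
  have hdiffsA : MeasurableSet (s \ A) := hs.diff hAmeas
  set I : ℝ := ∫ ω in s ∩ A, f ω ∂μ with hI
  set J : ℝ := ∫ ω in A \ s, f ω ∂μ with hJ
  set K : ℝ := ∫ ω in s \ A, f ω ∂μ with hK
  have hint : ∀ t : Set Ω, IntegrableOn f t μ := fun t => hU2int.integrableOn
  -- splitting of integrals
  have hsplitA : ∫ ω in A, f ω ∂μ = I + J := by
    rw [hI, hJ, ← setIntegral_union]
    · rw [Set.inter_comm, Set.inter_union_diff]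
    · exact Set.disjoint_sdiff_right.mono_left Set.inter_subset_left
    · exact hdiffAs
    · exact hint _
    · exact hint _
  have hsplits : ∫ ω in s, f ω ∂μ = I + K := by
    rw [hI, hK, ← setIntegral_union]
    · rw [Set.inter_union_diff]
    · exact Set.disjoint_sdiff_right.mono_left Set.inter_subset_right
    · exact hdiffsA
    · exact hint _
    · exact hint _
  -- measure splits
  have hmA : a = c + (μ (A \ s)).toReal := by
    rw [ha, hc, ← ENNReal.toReal_add (measure_ne_top _ _) (measure_ne_top _ _)]
    congr 1
    rw [Set.inter_comm, measure_inter_add_diff A hs]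
  have hms : b = c + (μ (s \ A)).toReal := by
    rw [hb, hc, ← ENNReal.toReal_add (measure_ne_top _ _) (measure_ne_top _ _)]
    congr 1
    rw [measure_inter_add_diff s hAmeas]
  -- bounds
  have hI_nonneg : 0 ≤ I := setIntegral_nonneg hsA (fun ω _ => by positivity)
  have hI_le : I ≤ uα * c := by
    have := setIntegral_mono_on (hint (s ∩ A)) (integrableOn_const (measure_lt_top μ _).ne) hsA
      (fun ω hω => le_of_lt hω.2)
    rw [setIntegral_const] at this
    simpa [hc, mul_comm, measureReal_def] using this
  have hJ_le : J ≤ uα * (μ (A \ s)).toReal := by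
    have := setIntegral_mono_on (hint (A \ s)) (integrableOn_const (measure_lt_top μ _).ne) hdiffAs
      (fun ω hω => le_of_lt hω.1)
    rw [setIntegral_const] at this
    simpa [mul_comm, measureReal_def] using this
  have hK_ge : uα * (μ (s \ A)).toReal ≤ K := by
    have := setIntegral_mono_on (integrableOn_const (measure_lt_top μ _).ne) (hint (s \ A)) hdiffsA
      (fun ω hω => not_lt.mp hω.2)
    rw [setIntegral_const] at this
    simpa [mul_comm, measureReal_def] using this
  -- conditional integrals
  have hcondA : ∫ ω, f ω ∂(μ[|A]) = a⁻¹ * ∫ ω in A, f ω ∂μ := by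
    simp only [ProbabilityTheory.cond, integral_smul_measure, ENNReal.toReal_inv, ha, smul_eq_mul]
  have hconds : ∫ ω, f ω ∂(μ[|s]) = b⁻¹ * ∫ ω in s, f ω ∂μ := by
    simp only [ProbabilityTheory.cond, integral_smul_measure, ENNReal.toReal_inv, hb, smul_eq_mul]
  show ∫ ω, f ω ∂(μ[|A]) ≤ ∫ ω, f ω ∂(μ[|s])
  rw [hcondA, hconds, hsplitA, hsplits]
  rw [inv_mul_eq_div, inv_mul_eq_div, div_le_div_iff₀ ha_pos hb_pos]
  have hx : (μ (A \ s)).toReal = a - c := by linarith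
  have hy : (μ (s \ A)).toReal = b - c := by linarith
  rw [hx] at hJ_le
  rw [hy] at hK_ge
  nlinarith [mul_le_mul_of_nonneg_right hJ_le hb_pos.le,
    mul_le_mul_of_nonneg_right hK_ge ha_pos.le,
    mul_nonneg (sub_nonneg.mpr hb_ge) (sub_nonneg.mpr hI_le)]
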